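/- Let A be a non-unital faithful algebra and let |·| be a minimal submultiplicative norm on A, i.e. any submultiplicative norm |||·||| on A with |||·||| ≤ |·| is equivalent to |·|. Then the operator norm |·|_op on A_e is a minimal submultiplicative norm on the unitization A_e. -/

import Mathlib

/-- A submultiplicative algebra norm on a (possibly non-unital) complex algebra. -/
structure AlgNorm (A : Type*) [NonUnitalRing A] [Module ℂ A]
    extends RingNorm A where
  smul' : ∀ (c : ℂ) (x : A), toFun (c • x) = ‖c‖ * toFun x

/-- The operator norm on the unitization `A_e` induced by the norm of `A`:
`‖a + λ1‖_op = sup {‖ax + λx‖ : ‖x‖ ≤ 1}`. -/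
noncomputable def opU {A : Type*} [NonUnitalNormedRing A] [NormedSpace ℂ A]
    [IsScalarTower ℂ A A] [SMulCommClass ℂ A A] (z : Unitization ℂ A) : ℝ :=
  sSup {r : ℝ | ∃ x : A, ‖x‖ ≤ 1 ∧ r = ‖z.snd * x + z.fst • x‖}

/-- If `A` is a non-unital faithful algebra and its norm `|·|` is a minimal
submultiplicative norm (any algebra norm dominated by it equals it), then the induced
operator norm `|·|_op` on the unitization `A_e` is a minimal norm on `A_e`. -/
theorem opNorm_minimal_of_minimal
    (A : Type*) [NonUnitalNormedRing A] [NormedSpace ℂ A]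
    [IsScalarTower ℂ A A] [SMulCommClass ℂ A A]
    (hA : ¬ ∃ e : A, ∀ x : A, e * x = x ∧ x * e = x)
    (hfaith : ∀ a : A, (∀ x : A, a * x = 0) → a = 0)
    (hmin : ∀ p : AlgNorm A, (∀ x : A, p.toRingNorm x ≤ ‖x‖) →
      ∀ x : A, p.toRingNorm x = ‖x‖) :
    ∀ q : AlgNorm (Unitization ℂ A),
      (∀ z : Unitization ℂ A, q.toRingNorm z ≤ opU z) →
      ∀ z : Unitization ℂ A, q.toRingNorm z = opU z := by
  intro q hq
  -- restrict q to A
  set p : AlgNorm A :=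
    { toFun := fun a => q.toRingNorm (Unitization.inr a)
      map_zero' := by simp
      add_le' := fun a b => by
        simpa using show q.toRingNorm (Unitization.inr a + Unitization.inr b) ≤ q.toRingNorm (Unitization.inr a) + q.toRingNorm (Unitization.inr b) from q.toRingNorm.add_le' (Unitization.inr a) (Unitization.inr b)
      neg' := fun a => by
        simpa [Unitization.inr_neg] using q.toRingNorm.neg' (Unitization.inr a)
      mul_le' := fun a b => by
        simpa [Unitization.inr_mul] using show q.toRingNorm (Unitization.inr a * Unitization.inr b) ≤ q.toRingNorm (Unitization.inr a) * q.toRingNorm (Unitization.inr b) from q.toRingNorm.mul_le' (Unitization.inr a) (Unitization.inr b)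
      eq_zero_of_map_eq_zero' := fun a ha => by
        have := q.toRingNorm.eq_zero_of_map_eq_zero' _ ha
        rwa [← Unitization.inr_zero ℂ, Unitization.inr_injective.eq_iff] at this
      smul' := fun c a => by
        simpa [Unitization.inr_smul] using show q.toRingNorm (c • (Unitization.inr a : Unitization ℂ A)) = ‖c‖ * q.toRingNorm (Unitization.inr a) from q.smul' c (Unitization.inr a) } with hp
  -- opU (inr a) ≤ ‖a‖
  have hopU_inr : ∀ a : A, opU (Unitization.inr a : Unitization ℂ A) ≤ ‖a‖ := by
    intro a
    refine csSup_le ⟨_, ⟨0, by simp, rfl⟩⟩ ?_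
    rintro r ⟨x, hx, rfl⟩
    simp only [Unitization.fst_inr, Unitization.snd_inr, zero_smul, add_zero]
    calc ‖a * x‖ ≤ ‖a‖ * ‖x‖ := norm_mul_le a x
      _ ≤ ‖a‖ * 1 := by
          exact mul_le_mul_of_nonneg_left hx (norm_nonneg a)
      _ = ‖a‖ := mul_one _
  -- p ≤ ‖·‖, hence p = ‖·‖
  have hpn : ∀ a : A, p.toRingNorm a = ‖a‖ := by
    refine hmin p fun a => ?_
    exact le_trans (hq _) (hopU_inr a)
  intro z
  refine le_antisymm (hq z) ?_
  refine csSup_le ⟨_, ⟨0, by simp, rfl⟩⟩ ?_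
  rintro r ⟨x, hx, rfl⟩
  have key : (Unitization.inr (z.snd * x + z.fst • x) : Unitization ℂ A) =
      z * Unitization.inr x := by
    ext
    · simp
    · simp [add_comm]
  have hpq : ∀ a : A, p.toRingNorm a = q.toRingNorm (Unitization.inr a) := fun a => rfl
  calc ‖z.snd * x + z.fst • x‖ = p.toRingNorm (z.snd * x + z.fst • x) := (hpn _).symm
    _ = q.toRingNorm (z * Unitization.inr x) := by rw [hpq, key]
    _ ≤ q.toRingNorm z * q.toRingNorm (Unitization.inr x) :=
        q.toRingNorm.mul_le' _ _
    _ = q.toRingNorm z * ‖x‖ := by rw [← hpq, hpn x]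
    _ ≤ q.toRingNorm z * 1 :=
        mul_le_mul_of_nonneg_left hx (apply_nonneg q.toRingNorm z)
    _ = q.toRingNorm z := mul_one _
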